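/- If (T_x(X), T_y(Y)) is globally sufficient for θ (θ–(T_x(X),T_y(Y))–(X,Y) is a Markov chain), then T_x(X) is conditionally sufficient for θ given Y, i.e., θ–(T_x(X),Y)–X is a Markov chain. -/
import Mathlib


open scoped Classical BigOperators

/-- Probability of a set of outcomes under a pmf `p` on a finite sample space. -/
noncomputable def pr {Ω : Type*} [Fintype Ω] (p : Ω → ℝ) (s : Set Ω) : ℝ :=
  ∑ ω, if ω ∈ s then p ω else 0

/-- `p` is a probability mass function on the finite sample space `Ω`. -/
def IsPMF {Ω : Type*} [Fintype Ω] (p : Ω → ℝ) : Prop :=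
  (∀ ω, 0 ≤ p ω) ∧ (∑ ω, p ω) = 1

/-- The Markov chain `A – B – C`: `A` and `C` are conditionally independent given `B`. -/
def MarkovChain {Ω α β γ : Type*} [Fintype Ω] (p : Ω → ℝ)
    (A : Ω → α) (B : Ω → β) (C : Ω → γ) : Prop :=
  ∀ (a : α) (b : β) (c : γ),
    pr p {ω | A ω = a ∧ B ω = b ∧ C ω = c} * pr p {ω | B ω = b} =
      pr p {ω | A ω = a ∧ B ω = b} * pr p {ω | B ω = b ∧ C ω = c}

lemma pr_congr {Ω : Type*} [Fintype Ω] (p : Ω → ℝ) {s t : Set Ω}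
    (h : ∀ ω, ω ∈ s ↔ ω ∈ t) : pr p s = pr p t := by
  rw [Set.ext h]

lemma pr_nonneg {Ω : Type*} [Fintype Ω] {p : Ω → ℝ} (hp : ∀ ω, 0 ≤ p ω) (s : Set Ω) :
    0 ≤ pr p s := by
  refine Finset.sum_nonneg fun ω _ => ?_
  split <;> simp [hp ω]

lemma pr_mono {Ω : Type*} [Fintype Ω] {p : Ω → ℝ} (hp : ∀ ω, 0 ≤ p ω) {s t : Set Ω}
    (h : s ⊆ t) : pr p s ≤ pr p t := by
  refine Finset.sum_le_sum fun ω _ => ?_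
  by_cases hs : ω ∈ s
  · simp [hs, h hs]
  · simp only [hs, if_false]
    split <;> simp [hp ω]

lemma pr_partition {Ω γ : Type*} [Fintype Ω] (p : Ω → ℝ) (Q : Ω → Prop) (f : Ω → γ) :
    ∑ x ∈ Finset.univ.image f, pr p {ω | Q ω ∧ f ω = x} = pr p {ω | Q ω} := by
  unfold pr
  rw [Finset.sum_comm]
  refine Finset.sum_congr rfl fun ω _ => ?_
  by_cases hQ : Q ω
  · simp only [Set.mem_setOf_eq, hQ, true_and]
    rw [Finset.sum_ite_eq (Finset.univ.image f) (f ω) (fun _ => p ω)]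
    simp
  · simp [hQ]

/-- If `(T_x(X), T_y(Y))` is globally sufficient for `θ`, then `T_x(X)` is conditionally
sufficient for `θ` given `Y`, i.e. `θ – (T_x(X), Y) – X` is a Markov chain. -/
theorem global_sufficiency_implies_conditional_sufficiency
    {Ω Θ 𝒳 𝒴 T₁ T₂ : Type*} [Fintype Ω]
    (p : Ω → ℝ) (hp : IsPMF p)
    (θ : Ω → Θ) (X : Ω → 𝒳) (Y : Ω → 𝒴) (Tx : 𝒳 → T₁) (Ty : 𝒴 → T₂)
    (hglob : MarkovChain p θ (fun ω => (Tx (X ω), Ty (Y ω))) (fun ω => (X ω, Y ω))) :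
    MarkovChain p θ (fun ω => (Tx (X ω), Y ω)) X := by
  obtain ⟨hp0, -⟩ := hp
  rintro a ⟨t, y⟩ x
  set A1 := pr p {ω | θ ω = a ∧ Tx (X ω) = t ∧ Y ω = y ∧ X ω = x} with hA1
  set B1 := pr p {ω | Tx (X ω) = t ∧ Y ω = y} with hB1
  set A2 := pr p {ω | θ ω = a ∧ Tx (X ω) = t ∧ Y ω = y} with hA2
  set B2 := pr p {ω | Tx (X ω) = t ∧ Y ω = y ∧ X ω = x} with hB2
  set D := pr p {ω | Tx (X ω) = t ∧ Ty (Y ω) = Ty y} with hD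
  set M := pr p {ω | θ ω = a ∧ Tx (X ω) = t ∧ Ty (Y ω) = Ty y} with hM
  have goal_eq : pr p {ω | θ ω = a ∧ (Tx (X ω), Y ω) = (t, y) ∧ X ω = x}
      * pr p {ω | (Tx (X ω), Y ω) = (t, y)}
      = A1 * B1 := by
    rw [pr_congr p (s := {ω | θ ω = a ∧ (Tx (X ω), Y ω) = (t, y) ∧ X ω = x})
      (t := {ω | θ ω = a ∧ Tx (X ω) = t ∧ Y ω = y ∧ X ω = x})
      (fun ω => by simp [Prod.ext_iff]; tauto),
      pr_congr p (s := {ω | (Tx (X ω), Y ω) = (t, y)})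
      (t := {ω | Tx (X ω) = t ∧ Y ω = y}) (fun ω => by simp [Prod.ext_iff])]
  have goal_eq2 : pr p {ω | θ ω = a ∧ (Tx (X ω), Y ω) = (t, y)}
      * pr p {ω | (Tx (X ω), Y ω) = (t, y) ∧ X ω = x}
      = A2 * B2 := by
    rw [pr_congr p (s := {ω | θ ω = a ∧ (Tx (X ω), Y ω) = (t, y)})
      (t := {ω | θ ω = a ∧ Tx (X ω) = t ∧ Y ω = y}) (fun ω => by simp [Prod.ext_iff]),
      pr_congr p (s := {ω | (Tx (X ω), Y ω) = (t, y) ∧ X ω = x})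
      (t := {ω | Tx (X ω) = t ∧ Y ω = y ∧ X ω = x})
      (fun ω => by simp [Prod.ext_iff]; tauto)]
  rw [goal_eq, goal_eq2]
  -- equation from global chain at this point
  have hE : A1 * D = M * B2 := by
    have h := hglob a (t, Ty y) (x, y)
    simp only at h
    rw [pr_congr p (s := {ω | θ ω = a ∧ (Tx (X ω), Ty (Y ω)) = (t, Ty y) ∧ (X ω, Y ω) = (x, y)})
      (t := {ω | θ ω = a ∧ Tx (X ω) = t ∧ Y ω = y ∧ X ω = x})
      (fun ω => by simp only [Set.mem_setOf_eq, Prod.ext_iff]; constructor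
                   · rintro ⟨h1, ⟨h2, h3⟩, h4, h5⟩; exact ⟨h1, h2, h5, h4⟩
                   · rintro ⟨h1, h2, h3, h4⟩; exact ⟨h1, ⟨h2, by rw [h3]⟩, h4, h3⟩),
      pr_congr p (s := {ω | (Tx (X ω), Ty (Y ω)) = (t, Ty y)})
      (t := {ω | Tx (X ω) = t ∧ Ty (Y ω) = Ty y}) (fun ω => by simp [Prod.ext_iff]),
      pr_congr p (s := {ω | θ ω = a ∧ (Tx (X ω), Ty (Y ω)) = (t, Ty y)})
      (t := {ω | θ ω = a ∧ Tx (X ω) = t ∧ Ty (Y ω) = Ty y}) (fun ω => by simp [Prod.ext_iff]),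
      pr_congr p (s := {ω | (Tx (X ω), Ty (Y ω)) = (t, Ty y) ∧ (X ω, Y ω) = (x, y)})
      (t := {ω | Tx (X ω) = t ∧ Y ω = y ∧ X ω = x})
      (fun ω => by simp only [Set.mem_setOf_eq, Prod.ext_iff]; constructor
                   · rintro ⟨⟨h2, h3⟩, h4, h5⟩; exact ⟨h2, h5, h4⟩
                   · rintro ⟨h2, h3, h4⟩; exact ⟨⟨h2, by rw [h3]⟩, h4, h3⟩)] at h
    exact h
  -- summed equation
  have hS : A2 * D = M * B1 := by
    have h := fun x' => hglob a (t, Ty y) (x', y)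
    have h1 : ∀ x', pr p {ω | θ ω = a ∧ (fun ω => (Tx (X ω), Ty (Y ω))) ω = (t, Ty y) ∧
        (fun ω => (X ω, Y ω)) ω = (x', y)}
        = pr p {ω | (θ ω = a ∧ Tx (X ω) = t ∧ Y ω = y) ∧ X ω = x'} := fun x' =>
      pr_congr p (fun ω => by
        simp only [Set.mem_setOf_eq, Prod.ext_iff]; constructor
        · rintro ⟨h1, ⟨h2, h3⟩, h4, h5⟩; exact ⟨⟨h1, h2, h5⟩, h4⟩
        · rintro ⟨⟨h1, h2, h3⟩, h4⟩; exact ⟨h1, ⟨h2, by rw [h3]⟩, h4, h3⟩)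
    have h2 : ∀ x', pr p {ω | (fun ω => (Tx (X ω), Ty (Y ω))) ω = (t, Ty y) ∧
        (fun ω => (X ω, Y ω)) ω = (x', y)}
        = pr p {ω | (Tx (X ω) = t ∧ Y ω = y) ∧ X ω = x'} := fun x' =>
      pr_congr p (fun ω => by
        simp only [Set.mem_setOf_eq, Prod.ext_iff]; constructor
        · rintro ⟨⟨h2, h3⟩, h4, h5⟩; exact ⟨⟨h2, h5⟩, h4⟩
        · rintro ⟨⟨h2, h3⟩, h4⟩; exact ⟨⟨h2, by rw [h3]⟩, h4, h3⟩)
    have hDeq : pr p {ω | (fun ω => (Tx (X ω), Ty (Y ω))) ω = (t, Ty y)} = D :=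
      pr_congr p (fun ω => by simp [Prod.ext_iff])
    have hMeq : pr p {ω | θ ω = a ∧ (fun ω => (Tx (X ω), Ty (Y ω))) ω = (t, Ty y)} = M :=
      pr_congr p (fun ω => by simp [Prod.ext_iff])
    have hsum := Finset.sum_congr rfl (fun x' (_ : x' ∈ Finset.univ.image X) => h x')
    simp only [h1, h2, hDeq, hMeq] at hsum
    rw [← Finset.sum_mul, ← Finset.mul_sum,
      pr_partition p (fun ω => θ ω = a ∧ Tx (X ω) = t ∧ Y ω = y) X,
      pr_partition p (fun ω => Tx (X ω) = t ∧ Y ω = y) X] at hsum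
    exact hsum
  by_cases hDz : D = 0
  · have hsub : {ω | θ ω = a ∧ Tx (X ω) = t ∧ Y ω = y ∧ X ω = x} ⊆
        {ω | Tx (X ω) = t ∧ Ty (Y ω) = Ty y} := by
      rintro ω ⟨-, h2, h3, -⟩; exact ⟨h2, by rw [h3]⟩
    have hsub2 : {ω | θ ω = a ∧ Tx (X ω) = t ∧ Y ω = y} ⊆
        {ω | Tx (X ω) = t ∧ Ty (Y ω) = Ty y} := by
      rintro ω ⟨-, h2, h3⟩; exact ⟨h2, by rw [h3]⟩
    have hA1z : A1 = 0 := le_antisymm (hDz ▸ pr_mono hp0 hsub) (pr_nonneg hp0 _)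
    have hA2z : A2 = 0 := le_antisymm (hDz ▸ pr_mono hp0 hsub2) (pr_nonneg hp0 _)
    rw [hA1z, hA2z, zero_mul, zero_mul]
  · have key : A1 * B1 * D = A2 * B2 * D := by
      calc A1 * B1 * D = (A1 * D) * B1 := by ring
        _ = (M * B2) * B1 := by rw [hE]
        _ = (M * B1) * B2 := by ring
        _ = (A2 * D) * B2 := by rw [hS]
        _ = A2 * B2 * D := by ring
    exact mul_right_cancel₀ hDz key
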